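/- arXiv:0805.1234 — 5 statements merged into one kernel-verified Lean document; each statement's English description precedes it below -/
import Mathlib

section
/- Let φ: A → B be an injective homomorphism of finitely generated groups, suppose B is a subgroup of a group π, and let π̃ ⊆ π be a finite-index subgroup. Let g_1, …, g_k ∈ π be a complete set of representatives of the double cosets B\π/π̃, and for i = 1, …, k set B̃_i = B ∩ g_i π̃ g_i⁻¹ and Ã_i = φ⁻¹(B̃_i). Then the induced map φ_*: H_0(A; ℤ[π/π̃]) → H_0(B; ℤ[π/π̃]) on zeroth group homology is a surjection, and it is a bijection if and only if for every i the induced map of left coset spaces A/Ã_i → B/B̃_i is a bijection. -/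
noncomputable section

namespace FV

variable {A B : Type} [Group A] [Group B] {M : Type} [AddCommGroup M]

/-- The group structure on `AddAut M` with multiplication given by composition, as in the
older library (where `AddAut M` was a multiplicative group). -/
instance addAutGroup (M : Type) [AddCommGroup M] : Group (AddAut M) where
  mul g h := AddEquiv.trans h g
  one := AddEquiv.refl _
  inv := AddEquiv.symm
  mul_assoc _ _ _ := rfl
  one_mul _ := rfl
  mul_one _ := rfl
  inv_mul_cancel := AddEquiv.self_trans_symm

/-- An action of the group `A` on the abelian group `M` by additive automorphisms,
i.e. a `ℤ[A]`-module structure on `M`. -/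
abbrev Rep (A M : Type) [Group A] [AddCommGroup M] := A →* AddAut M

/-- The boundary map `C₁ → C₀` of the inhomogeneous chain complex computing the group homology
of `A` with coefficients in `M`; on a generator `a ⊗ m` it is `a⁻¹ • m - m`. -/
def d1 (ρ : Rep A M) : (A →₀ M) →+ M :=
  Finsupp.liftAddHom fun a => (ρ a⁻¹).toAddMonoidHom - AddMonoidHom.id M

/-- The boundary map `C₂ → C₁`; on a generator `(a₁, a₂) ⊗ m` it is
`a₂ ⊗ a₁⁻¹ • m - (a₁a₂) ⊗ m + a₁ ⊗ m`. -/
def d2 (ρ : Rep A M) : (A × A →₀ M) →+ (A →₀ M) :=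
  Finsupp.liftAddHom fun p => (Finsupp.singleAddHom p.2).comp (ρ p.1⁻¹).toAddMonoidHom
    - Finsupp.singleAddHom (p.1 * p.2) + Finsupp.singleAddHom p.1

/-- Zeroth group homology `H₀(A; M)`, the coinvariants of the action. -/
abbrev H0 (ρ : Rep A M) := M ⧸ (d1 ρ).range

/-- One-cycles. -/
abbrev Z1 (ρ : Rep A M) : AddSubgroup (A →₀ M) := (d1 ρ).ker

/-- First group homology `H₁(A; M)`: one-cycles modulo one-boundaries. -/
abbrev H1 (ρ : Rep A M) := Z1 ρ ⧸ ((d2 ρ).range.addSubgroupOf (Z1 ρ))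

lemma d1_comp (φ : A →* B) (ρ : Rep B M) :
    d1 (ρ.comp φ) = (d1 ρ).comp (Finsupp.mapDomain.addMonoidHom φ) := by
  refine Finsupp.addHom_ext fun a m => ?_
  simp [d1, Finsupp.mapDomain.addMonoidHom_apply, Finsupp.mapDomain_single]

lemma d2_comp (φ : A →* B) (ρ : Rep B M) :
    (Finsupp.mapDomain.addMonoidHom φ).comp (d2 (ρ.comp φ))
      = (d2 ρ).comp (Finsupp.mapDomain.addMonoidHom (Prod.map φ φ)) := by
  refine Finsupp.addHom_ext fun p m => ?_
  simp only [AddMonoidHom.comp_apply, d2, Finsupp.liftAddHom_apply_single,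
    AddMonoidHom.sub_apply, AddMonoidHom.add_apply, Finsupp.singleAddHom_apply, map_add, map_sub]
  simp [Finsupp.mapDomain.addMonoidHom_apply, Finsupp.mapDomain_single]

/-- The map `H₀(A; M) → H₀(B; M)` induced by a homomorphism `φ : A → B`, where `A` acts on the
`B`-module `M` through `φ`. -/
def H0Map (φ : A →* B) (ρ : Rep B M) : H0 (ρ.comp φ) →+ H0 ρ :=
  QuotientAddGroup.map _ _ (AddMonoidHom.id M) (by
    rw [d1_comp φ ρ]
    rintro x ⟨y, rfl⟩
    exact ⟨Finsupp.mapDomain.addMonoidHom φ y, rfl⟩)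

/-- The map on one-cycles induced by `φ`. -/
def Z1Map (φ : A →* B) (ρ : Rep B M) : Z1 (ρ.comp φ) →+ Z1 ρ :=
  ((Finsupp.mapDomain.addMonoidHom φ).domRestrict (Z1 (ρ.comp φ))).codRestrict (Z1 ρ)
    (by
      rintro ⟨x, hx⟩
      have hx' : d1 (ρ.comp φ) x = 0 := hx
      rw [d1_comp φ ρ] at hx'
      exact hx')

/-- The map `H₁(A; M) → H₁(B; M)` induced by a homomorphism `φ : A → B`, where `A` acts on the
`B`-module `M` through `φ`. -/
def H1Map (φ : A →* B) (ρ : Rep B M) : H1 (ρ.comp φ) →+ H1 ρ :=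
  QuotientAddGroup.map _ _ (Z1Map φ ρ) (by
    rintro ⟨x, hx⟩ hmem
    obtain ⟨y, hy⟩ := hmem
    refine ⟨Finsupp.mapDomain.addMonoidHom (Prod.map φ φ) y, ?_⟩
    have h2 := DFunLike.congr_fun (d2_comp φ ρ) y
    simp only [AddMonoidHom.comp_apply] at h2
    rw [hy] at h2
    exact h2.symm)

/-- The permutation representation: `G` acting on the free abelian group `ℤ[X]` on a `G`-set
`X` by permuting basis elements. -/
def permRep (G X : Type) [Group G] [MulAction G X] : Rep G (X →₀ ℤ) where
  toFun g := Finsupp.domCongr (MulAction.toPerm g)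
  map_one' := by
    ext f x
    show _ = f x
    simp
  map_mul' g h := by
    ext f x
    show _ = Finsupp.domCongr _ (Finsupp.domCongr _ f) x
    simp [mul_smul]

end FV

namespace FV

variable {A B : Type} [Group A] [Group B]

/-- The map of left coset spaces `A/J → B/K` induced by a homomorphism `φ : A → B`
with `φ(J) ⊆ K`. -/
def cosetMap (φ : A →* B) (J : Subgroup A) (K : Subgroup B) (h : J ≤ K.comap φ) :
    A ⧸ J → B ⧸ K :=
  Quotient.map' φ fun a a' hr => by
    rw [QuotientGroup.leftRel_apply] at hr ⊢
    simpa using h hr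

lemma commutator_comap_le (φ : A →* B) (K : Subgroup B) :
    ⁅K.comap φ, K.comap φ⁆ ≤ (⁅K, K⁆).comap φ := by
  rw [← Subgroup.map_le_iff_le_comap, Subgroup.map_commutator]
  exact Subgroup.commutator_mono (Subgroup.map_comap_le φ K) (Subgroup.map_comap_le φ K)

end FV


namespace FV

section OrbitKernel

variable {G πg X : Type} [Group G] [Group πg] [MulAction πg X]

lemma d1_permRep_comp_single (σ : G →* πg) (a : G) (x : X) (n : ℤ) :
    d1 ((permRep πg X).comp σ) (Finsupp.single a (Finsupp.single x n))
      = Finsupp.single (σ a⁻¹ • x) n - Finsupp.single x n := by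
  simp [d1, permRep, Finsupp.domCongr_apply]

lemma d1_permRep_comp_apply_single (σ : G →* πg) (a : G) (m : X →₀ ℤ) :
    d1 ((permRep πg X).comp σ) (Finsupp.single a m)
      = Finsupp.mapDomain (fun x => σ a⁻¹ • x) m - m := by
  simp only [d1, Finsupp.liftAddHom_apply_single, AddMonoidHom.sub_apply,
    AddMonoidHom.id_apply]
  congr 1
  show Finsupp.equivMapDomain (MulAction.toPerm (σ a⁻¹)) m = _
  rw [Finsupp.equivMapDomain_eq_mapDomain]
  rfl

lemma range_d1_eq_ker (σ : G →* πg) (s : Setoid X)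
    (hs : ∀ x y : X, Quotient.mk s x = Quotient.mk s y ↔ ∃ g : G, σ g • x = y) :
    (d1 ((permRep πg X).comp σ)).range
      = (Finsupp.mapDomain.addMonoidHom (Quotient.mk s) :
          (X →₀ ℤ) →+ (Quotient s →₀ ℤ)).ker := by
  apply le_antisymm
  · rintro _ ⟨f, rfl⟩
    rw [AddMonoidHom.mem_ker, Finsupp.mapDomain.addMonoidHom_apply]
    induction f using Finsupp.induction_linear with
    | zero => simp
    | add f g hf hg => rw [map_add, Finsupp.mapDomain_add, hf, hg, add_zero]
    | single a m =>
      rw [d1_permRep_comp_apply_single,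
        show Finsupp.mapDomain (Quotient.mk s)
            (Finsupp.mapDomain (fun x => σ a⁻¹ • x) m - m)
          = Finsupp.mapDomain (Quotient.mk s) (Finsupp.mapDomain (fun x => σ a⁻¹ • x) m)
            - Finsupp.mapDomain (Quotient.mk s) m from
          map_sub (Finsupp.mapDomain.addMonoidHom (Quotient.mk s)) _ _,
        ← Finsupp.mapDomain_comp]
      have h2 : (Quotient.mk s) ∘ (fun x => σ a⁻¹ • x) = Quotient.mk s := by
        funext x
        exact (hs _ _).2 ⟨a, by rw [map_inv, smul_smul, mul_inv_cancel, one_smul]⟩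
      rw [h2, sub_self]
  · intro f hf
    rw [AddMonoidHom.mem_ker, Finsupp.mapDomain.addMonoidHom_apply] at hf
    have key : ∀ f : X →₀ ℤ,
        f - Finsupp.mapDomain (fun x => (Quotient.mk s x).out) f
          ∈ (d1 ((permRep πg X).comp σ)).range := by
      intro f
      induction f using Finsupp.induction_linear with
      | zero => rw [Finsupp.mapDomain_zero, sub_zero]; exact zero_mem _
      | add f g hf hg =>
        rw [Finsupp.mapDomain_add]
        have := add_mem hf hg
        convert this using 1
        abel
      | single x n =>
        rw [Finsupp.mapDomain_single]
        obtain ⟨g₀, hg₀⟩ : ∃ g₀ : G, σ g₀ • x = (Quotient.mk s x).out :=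
          (hs _ _).1 (Quotient.out_eq (Quotient.mk s x)).symm
        refine ⟨Finsupp.single g₀ (Finsupp.single (Quotient.mk s x).out n), ?_⟩
        rw [d1_permRep_comp_single]
        have hx : σ g₀⁻¹ • (Quotient.mk s x).out = x := by
          rw [map_inv, inv_smul_eq_iff]
          exact hg₀.symm
        rw [hx]
    have h0 : Finsupp.mapDomain (fun x => (Quotient.mk s x).out) f = 0 := by
      have hco : (fun x : X => (Quotient.mk s x).out) = Quotient.out ∘ Quotient.mk s := rfl
      rw [hco, Finsupp.mapDomain_comp, hf, Finsupp.mapDomain_zero]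
    have := key f
    rwa [h0, sub_zero] at this

end OrbitKernel

section H0Aux

variable {A B : Type} [Group A] [Group B] {M : Type} [AddCommGroup M]

lemma H0Map_mk (φ : A →* B) (ρ : Rep B M) (m : M) :
    H0Map φ ρ (QuotientAddGroup.mk m) = QuotientAddGroup.mk m := rfl

lemma H0Map_surjective (φ : A →* B) (ρ : Rep B M) :
    Function.Surjective (H0Map φ ρ) := by
  intro y
  obtain ⟨m, rfl⟩ := QuotientAddGroup.mk_surjective y
  exact ⟨QuotientAddGroup.mk m, H0Map_mk φ ρ m⟩

lemma H0Map_injective_iff (φ : A →* B) (ρ : Rep B M) :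
    Function.Injective (H0Map φ ρ) ↔ (d1 ρ).range ≤ (d1 (ρ.comp φ)).range := by
  constructor
  · intro h m hm
    have h0 : H0Map φ ρ (QuotientAddGroup.mk m) = H0Map φ ρ 0 := by
      rw [map_zero, H0Map_mk, QuotientAddGroup.eq_zero_iff]
      exact hm
    have := h h0
    rwa [QuotientAddGroup.eq_zero_iff] at this
  · intro h x y hxy
    obtain ⟨m, rfl⟩ := QuotientAddGroup.mk_surjective x
    obtain ⟨m', rfl⟩ := QuotientAddGroup.mk_surjective y
    rw [H0Map_mk, H0Map_mk, QuotientAddGroup.eq] at hxy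
    rw [QuotientAddGroup.eq]
    exact h hxy

lemma cosetMap_mk (φ : A →* B) (J : Subgroup A) (K : Subgroup B) (h : J ≤ K.comap φ) (a : A) :
    cosetMap φ J K h (QuotientGroup.mk a) = QuotientGroup.mk (φ a) := rfl

lemma cosetMap_injective (φ : A →* B) (K : Subgroup B) :
    Function.Injective (cosetMap φ (K.comap φ) K le_rfl) := by
  intro x y h
  obtain ⟨a, rfl⟩ := QuotientGroup.mk_surjective x
  obtain ⟨a', rfl⟩ := QuotientGroup.mk_surjective y
  rw [cosetMap_mk, cosetMap_mk, QuotientGroup.eq] at h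
  rw [QuotientGroup.eq]
  simpa [Subgroup.mem_comap, map_mul, map_inv] using h

end H0Aux

end FV

open FV

/-- Let `φ : A → B` be a monomorphism of finitely generated groups, `B ≤ π`
(via the injection `ι`), and `π̃ ≤ π` of finite index, with `g₁, …, g_k` a complete set of
representatives of the double cosets `B\π/π̃`.  With `B̃ᵢ = B ∩ gᵢ π̃ gᵢ⁻¹` and
`Ãᵢ = φ⁻¹(B̃ᵢ)`, the induced map `φ⁎ : H₀(A; ℤ[π/π̃]) → H₀(B; ℤ[π/π̃])` is surjective, and it
is bijective iff each induced map of left coset spaces `A/Ãᵢ → B/B̃ᵢ` is bijective. -/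
theorem stmt1 (A B π : Type) [Group A] [Group.FG A] [Group B] [Group.FG B] [Group π]
    (φ : A →* B) (hφ : Function.Injective φ)
    (ι : B →* π) (hι : Function.Injective ι)
    (π' : Subgroup π) [π'.FiniteIndex]
    (k : ℕ) (g : Fin k → π)
    (hreps : ∀ x : π, ∃! i : Fin k, ∃ b : B, ∃ p ∈ π', x = ι b * g i * p) :
    Function.Surjective (H0Map φ ((permRep π (π ⧸ π')).comp ι)) ∧
    (Function.Bijective (H0Map φ ((permRep π (π ⧸ π')).comp ι)) ↔
      ∀ i : Fin k,
        Function.Bijective (cosetMap φ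
          (((Subgroup.map (MulAut.conj (g i)).toMonoidHom π').comap ι).comap φ)
          ((Subgroup.map (MulAut.conj (g i)).toMonoidHom π').comap ι) le_rfl)) := by
  classical
  letI mA : MulAction A (π ⧸ π') := MulAction.compHom _ (ι.comp φ)
  letI mB : MulAction B (π ⧸ π') := MulAction.compHom _ ι
  let sA : Setoid (π ⧸ π') := MulAction.orbitRel A (π ⧸ π')
  let sB : Setoid (π ⧸ π') := MulAction.orbitRel B (π ⧸ π')
  have horbA : ∀ x y : π ⧸ π',
      Quotient.mk sA x = Quotient.mk sA y ↔ ∃ a : A, (ι.comp φ) a • x = y := by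
    intro x y
    rw [Quotient.eq, MulAction.orbitRel_apply, MulAction.mem_orbit_iff]
    constructor
    · rintro ⟨a, ha⟩
      refine ⟨a⁻¹, ?_⟩
      have ha' : (ι.comp φ) a • y = x := ha
      rw [map_inv, ← ha', inv_smul_smul]
    · rintro ⟨a, ha⟩
      refine ⟨a⁻¹, ?_⟩
      show (ι.comp φ) a⁻¹ • y = x
      rw [map_inv, ← ha, inv_smul_smul]
  have horbB : ∀ x y : π ⧸ π',
      Quotient.mk sB x = Quotient.mk sB y ↔ ∃ b : B, ι b • x = y := by
    intro x y
    rw [Quotient.eq, MulAction.orbitRel_apply, MulAction.mem_orbit_iff]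
    constructor
    · rintro ⟨b, hb⟩
      refine ⟨b⁻¹, ?_⟩
      have hb' : ι b • y = x := hb
      rw [map_inv, ← hb', inv_smul_smul]
    · rintro ⟨b, hb⟩
      refine ⟨b⁻¹, ?_⟩
      show ι b⁻¹ • y = x
      rw [map_inv, ← hb, inv_smul_smul]
  have hKA : (d1 (((permRep π (π ⧸ π')).comp ι).comp φ)).range
      = (Finsupp.mapDomain.addMonoidHom (Quotient.mk sA) :
          ((π ⧸ π') →₀ ℤ) →+ (Quotient sA →₀ ℤ)).ker :=
    range_d1_eq_ker (ι.comp φ) sA horbA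
  have hKB : (d1 ((permRep π (π ⧸ π')).comp ι)).range
      = (Finsupp.mapDomain.addMonoidHom (Quotient.mk sB) :
          ((π ⧸ π') →₀ ℤ) →+ (Quotient sB →₀ ℤ)).ker :=
    range_d1_eq_ker ι sB horbB
  have hsurj := H0Map_surjective φ ((permRep π (π ⧸ π')).comp ι)
  refine ⟨hsurj, ?_⟩
  have hbij : Function.Bijective (H0Map φ ((permRep π (π ⧸ π')).comp ι)) ↔
      Function.Injective (H0Map φ ((permRep π (π ⧸ π')).comp ι)) :=
    ⟨fun h => h.1, fun h => ⟨h, hsurj⟩⟩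
  rw [hbij, H0Map_injective_iff, hKB, hKA]
  -- the point x_i and the stabilizer subgroups
  have memK : ∀ (i : Fin k) (c : B),
      c ∈ (Subgroup.map (MulAut.conj (g i)).toMonoidHom π').comap ι ↔
        ι c • (QuotientGroup.mk (g i) : π ⧸ π') = QuotientGroup.mk (g i) := by
    intro i c
    rw [Subgroup.mem_comap, Subgroup.mem_map]
    rw [show (ι c • (QuotientGroup.mk (g i) : π ⧸ π')) = QuotientGroup.mk (ι c * g i) from rfl,
      QuotientGroup.eq]
    constructor
    · rintro ⟨p, hp, hpc⟩
      have hpc' : g i * p * (g i)⁻¹ = ι c := hpc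
      have : (ι c * g i)⁻¹ * g i = p⁻¹ := by
        rw [← hpc']; group
      rw [this]
      exact inv_mem hp
    · intro hmem
      refine ⟨(g i)⁻¹ * ι c * g i, ?_, ?_⟩
      · have : (g i)⁻¹ * ι c * g i = ((ι c * g i)⁻¹ * g i)⁻¹ := by group
        rw [this]
        exact inv_mem hmem
      · show g i * ((g i)⁻¹ * ι c * g i) * (g i)⁻¹ = ι c
        group
  have surjIff : ∀ i : Fin k,
      Function.Surjective (cosetMap φ
          (((Subgroup.map (MulAut.conj (g i)).toMonoidHom π').comap ι).comap φ)
          ((Subgroup.map (MulAut.conj (g i)).toMonoidHom π').comap ι) le_rfl) ↔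
        ∀ b : B, ∃ a : A,
          ι (φ a) • (QuotientGroup.mk (g i) : π ⧸ π') = ι b • QuotientGroup.mk (g i) := by
    intro i
    constructor
    · intro h b
      obtain ⟨qa, hqa⟩ := h (QuotientGroup.mk b)
      obtain ⟨a, rfl⟩ := QuotientGroup.mk_surjective qa
      rw [cosetMap_mk, QuotientGroup.eq] at hqa
      rw [memK] at hqa
      refine ⟨a, ?_⟩
      rw [map_mul, map_inv, mul_smul] at hqa
      exact (inv_smul_eq_iff.mp hqa).symm
    · intro h qb
      obtain ⟨b, rfl⟩ := QuotientGroup.mk_surjective qb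
      obtain ⟨a, ha⟩ := h b
      refine ⟨QuotientGroup.mk a, ?_⟩
      rw [cosetMap_mk, QuotientGroup.eq, memK, map_mul, map_inv, mul_smul]
      exact inv_smul_eq_iff.mpr ha.symm
  constructor
  · -- ker ≤ ker → each cosetMap bijective
    intro h i
    refine ⟨cosetMap_injective φ _, (surjIff i).2 ?_⟩
    intro b
    -- condition C from the kernel inclusion
    have hC : ∀ x y : π ⧸ π',
        Quotient.mk sB x = Quotient.mk sB y → Quotient.mk sA x = Quotient.mk sA y := by
      intro x y hxy
      by_contra hne
      have hmem : (Finsupp.single x (1 : ℤ) - Finsupp.single y 1) ∈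
          (Finsupp.mapDomain.addMonoidHom (Quotient.mk sB) :
            ((π ⧸ π') →₀ ℤ) →+ (Quotient sB →₀ ℤ)).ker := by
        rw [AddMonoidHom.mem_ker, map_sub, Finsupp.mapDomain.addMonoidHom_apply,
          Finsupp.mapDomain.addMonoidHom_apply, Finsupp.mapDomain_single,
          Finsupp.mapDomain_single, hxy, sub_self]
      have h0 := h hmem
      rw [AddMonoidHom.mem_ker, map_sub, Finsupp.mapDomain.addMonoidHom_apply,
        Finsupp.mapDomain.addMonoidHom_apply, Finsupp.mapDomain_single,
        Finsupp.mapDomain_single] at h0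
      have h1 := DFunLike.congr_fun h0 (Quotient.mk sA x)
      rw [Finsupp.sub_apply, Finsupp.single_eq_same,
        Finsupp.single_eq_of_ne fun hc => hne hc, Finsupp.coe_zero, Pi.zero_apply,
        sub_zero] at h1
      exact one_ne_zero h1
    have h1 : Quotient.mk sB (ι b • (QuotientGroup.mk (g i) : π ⧸ π'))
        = Quotient.mk sB (QuotientGroup.mk (g i)) :=
      (horbB _ _).2 ⟨b⁻¹, by rw [map_inv, inv_smul_smul]⟩
    obtain ⟨a, ha⟩ := (horbA _ _).1 (hC _ _ h1)
    refine ⟨a⁻¹, ?_⟩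
    have ha' : ι (φ a) • (ι b • (QuotientGroup.mk (g i) : π ⧸ π'))
        = QuotientGroup.mk (g i) := ha
    rw [map_inv, map_inv]
    exact inv_smul_eq_iff.mpr ha'.symm
  · -- each cosetMap bijective → ker ≤ ker
    intro hi f hf
    -- descend to the B-orbit quotient
    have hC : ∀ x y : π ⧸ π',
        Quotient.mk sB x = Quotient.mk sB y → Quotient.mk sA x = Quotient.mk sA y := by
      intro x y hxy
      obtain ⟨b, hb⟩ := (horbB x y).1 hxy
      obtain ⟨w, rfl⟩ := QuotientGroup.mk_surjective x
      obtain ⟨i, ⟨b₂, p, hp, hw⟩, -⟩ := hreps w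
      have hx : (QuotientGroup.mk w : π ⧸ π') = ι b₂ • QuotientGroup.mk (g i) := by
        rw [hw]
        exact (QuotientGroup.mk_mul_of_mem (ι b₂ * g i) hp)
      have hy : y = ι (b * b₂) • (QuotientGroup.mk (g i) : π ⧸ π') := by
        rw [map_mul, mul_smul, ← hx, hb]
      have hsurj_i := (surjIff i).1 (hi i).2
      obtain ⟨a₂, ha₂⟩ := hsurj_i b₂
      obtain ⟨a₁, ha₁⟩ := hsurj_i (b * b₂)
      have e1 : Quotient.mk sA (QuotientGroup.mk w : π ⧸ π')
          = Quotient.mk sA (QuotientGroup.mk (g i)) := by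
        refine (horbA _ _).2 ⟨a₂⁻¹, ?_⟩
        show ι (φ a₂⁻¹) • (QuotientGroup.mk w : π ⧸ π') = QuotientGroup.mk (g i)
        rw [map_inv, map_inv, hx, ← ha₂, inv_smul_smul]
      have e2 : Quotient.mk sA y = Quotient.mk sA (QuotientGroup.mk (g i) : π ⧸ π') := by
        refine (horbA _ _).2 ⟨a₁⁻¹, ?_⟩
        show ι (φ a₁⁻¹) • y = (QuotientGroup.mk (g i) : π ⧸ π')
        rw [map_inv, map_inv, hy, ← ha₁, inv_smul_smul]
      rw [e1, e2]
    have href : ∀ x y : π ⧸ π',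
        Quotient.mk sA x = Quotient.mk sA y → Quotient.mk sB x = Quotient.mk sB y := by
      intro x y hxy
      obtain ⟨a, ha⟩ := (horbA x y).1 hxy
      exact (horbB x y).2 ⟨φ a, ha⟩
    let r : Quotient sA → Quotient sB :=
      Quotient.lift (Quotient.mk sB) fun x y hxy => href x y (Quotient.sound hxy)
    have hr : Function.Injective r := by
      intro u v huv
      obtain ⟨x, rfl⟩ := Quotient.exists_rep u
      obtain ⟨y, rfl⟩ := Quotient.exists_rep v
      exact hC x y huv
    rw [AddMonoidHom.mem_ker, Finsupp.mapDomain.addMonoidHom_apply] at hf ⊢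
    apply Finsupp.mapDomain_injective hr
    rw [Finsupp.mapDomain_zero, ← Finsupp.mapDomain_comp]
    have hco : r ∘ Quotient.mk sA = Quotient.mk sB := rfl
    rw [hco]
    exact hf
end
end

section
/- Let φ: A → B be a homomorphism of finitely generated groups such that for every finite solvable group S the precomposition map φ*: Hom(B,S) → Hom(A,S), ψ ↦ ψ ∘ φ, is a bijection. Then for every finite solvable group G and every homomorphism β: B → G, the image of β ∘ φ: A → G equals the image of β: B → G. -/
/-- If `φ : A → B` is a homomorphism of finitely generated groups inducing an
isomorphism of prosolvable completions (i.e. `Hom(B,S) → Hom(A,S)` is bijective for every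
finite solvable `S`), then for every homomorphism `β : B → G` to a finite solvable group,
`im (β ∘ φ) = im β`. -/
theorem stmt7 (A B : Type) [Group A] [Group.FG A] [Group B] [Group.FG B]
    (φ : A →* B)
    (h : ∀ (S : Type) [Group S] [Finite S] [Group.IsSolvable S],
      Function.Bijective fun ψ : B →* S => ψ.comp φ)
    (G : Type) [Group G] [Finite G] [Group.IsSolvable G] (β : B →* G) :
    (β.comp φ).range = β.range := by
  set H : Subgroup G := (β.comp φ).range with hH
  -- corestriction A →* H
  obtain ⟨ψ, hψ⟩ := (h H).2 (β.comp φ).rangeRestrict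
  have key : H.subtype.comp ψ = β := by
    apply (h G).1
    show (H.subtype.comp ψ).comp φ = β.comp φ
    rw [MonoidHom.comp_assoc]
    simp only at hψ
    rw [hψ]
    ext a
    simp [MonoidHom.rangeRestrict]
    rfl
  apply le_antisymm
  · rintro g ⟨a, rfl⟩; exact ⟨φ a, rfl⟩
  · rw [← key]
    intro g hg
    obtain ⟨b, rfl⟩ := hg
    exact (ψ b).2
end

section
/- Let φ: A → B be a homomorphism of finitely generated groups such that for every finite solvable group S the precomposition map φ*: Hom(B,S) → Hom(A,S) is a bijection. Let β: B → G be a homomorphism to a finite solvable group G. Then φ restricts to a homomorphism φ': ker(β ∘ φ) → ker(β), and for every finite solvable group S the precomposition map (φ')*: Hom(ker(β), S) → Hom(ker(β∘φ), S) is a bijection. -/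
namespace FV

/-- The restriction of `φ : A → B` to a homomorphism `ker (β ∘ φ) → ker β`. -/
def kerRestrict {A B G : Type} [Group A] [Group B] [Group G] (φ : A →* B) (β : B →* G) :
    (β.comp φ).ker →* β.ker :=
  ((φ.domRestrict (β.comp φ).ker)).codRestrict β.ker fun x => by
    have hx := x.2
    rw [MonoidHom.mem_ker] at hx ⊢
    simpa using hx

end FV

open FV

namespace FVAux

open SemidirectProduct

/-- Pi groups over a solvable group are solvable. -/
lemma isSolvable_pi {X C : Type} [Group C] [Group.IsSolvable C] : Group.IsSolvable (X → C) := by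
  obtain ⟨n, hn⟩ := ‹Group.IsSolvable C›
  refine ⟨⟨n, eq_bot_iff.mpr fun f hf => ?_⟩⟩
  have hx : ∀ x : X, f x = 1 := by
    intro x
    have h1 : f x ∈ derivedSeries C n :=
      map_derivedSeries_le_derivedSeries (Pi.evalMonoidHom (fun _ : X => C) x) n
        (Subgroup.mem_map_of_mem _ hf)
    rw [hn] at h1
    exact h1
  exact Subgroup.mem_bot.mpr (funext hx)

/-- The action of `T` on `X → C` induced by a permutation representation of `T` on `X`. -/
def permAct {T X C : Type} [Group T] [Group C] (μ : T →* Equiv.Perm X) :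
    T →* MulAut (X → C) where
  toFun t :=
    { toFun := fun f x => f ((μ t)⁻¹ x)
      invFun := fun f x => f (μ t x)
      left_inv := fun f => by funext x; simp
      right_inv := fun f => by funext x; simp
      map_mul' := fun f g => rfl }
  map_one' := by ext f x; simp
  map_mul' t₁ t₂ := by
    ext f x
    simp [Equiv.Perm.mul_apply]

lemma permAct_apply {T X C : Type} [Group T] [Group C] (μ : T →* Equiv.Perm X)
    (t : T) (f : X → C) (x : X) : (permAct μ t f) x = f ((μ t)⁻¹ x) := rfl

/-- Semidirect products are finite when the pieces are. -/
lemma finite_sdp {N G : Type} [Group N] [Group G] [Finite N] [Finite G] {φ : G →* MulAut N} :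
    Finite (N ⋊[φ] G) :=
  Finite.of_injective (fun w => ((w.left, w.right) : N × G))
    (fun a b hab => by
      simp only [Prod.mk.injEq] at hab
      exact SemidirectProduct.ext hab.1 hab.2)

/-- Semidirect products are solvable when the pieces are. -/
lemma isSolvable_sdp {N G : Type} [Group N] [Group G] [Group.IsSolvable N] [Group.IsSolvable G]
    {φ : G →* MulAut N} : Group.IsSolvable (N ⋊[φ] G) :=
  solvable_of_ker_le_range (inl : N →* N ⋊[φ] G) (rightHom : N ⋊[φ] G →* G)
    (le_of_eq range_inl_eq_ker_rightHom.symm)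

/-- The right translation permutation representation of `G` on itself. -/
def rt (G : Type) [Group G] : G →* Equiv.Perm G where
  toFun g := Equiv.mulRight g⁻¹
  map_one' := by ext x; simp
  map_mul' g₁ g₂ := by ext x; simp [Equiv.Perm.mul_apply, mul_assoc]

lemma rt_inv_apply {G : Type} [Group G] (g x : G) : ((rt G g)⁻¹ : Equiv.Perm G) x = x * g := by
  simp [rt]

/-- The standard wreath-like solvable group used for induction of homomorphisms. -/
abbrev Wr (G S : Type) [Group G] [Group S] : Type := (G → S) ⋊[permAct (rt G)] G

open scoped Classical

/-- A set-theoretic section of `ρ` sending `1` to `1`. -/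
noncomputable def sec {X G : Type} [Group X] [Group G] (ρ : X →* G) : G → X :=
  fun g => if g = 1 then 1 else if hg : g ∈ ρ.range then (MonoidHom.mem_range.mp hg).choose else 1

lemma sec_one {X G : Type} [Group X] [Group G] (ρ : X →* G) : sec ρ 1 = 1 := by simp [sec]

lemma sec_spec {X G : Type} [Group X] [Group G] (ρ : X →* G) {g : G} (hg : g ∈ ρ.range) :
    ρ (sec ρ g) = g := by
  by_cases h1 : g = 1
  · simp [sec, h1]
  · simp only [sec, h1, if_false, dif_pos hg]
    exact (MonoidHom.mem_range.mp hg).choose_spec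

lemma mem_ker_aux {X G : Type} [Group X] [Group G] (ρ : X →* G) {g : G} (hg : g ∈ ρ.range)
    (x : X) : sec ρ g * x * (sec ρ (g * ρ x))⁻¹ ∈ ρ.ker := by
  have hg' : g * ρ x ∈ ρ.range := mul_mem hg ⟨x, rfl⟩
  rw [MonoidHom.mem_ker, map_mul, map_mul, map_inv, sec_spec ρ hg, sec_spec ρ hg']
  group

/-- The induced ("monomial") homomorphism `X →* Wr G S` built from `ψ` on `ker ρ`. -/
noncomputable def ind {X G S : Type} [Group X] [Group G] [Group S] (ρ : X →* G)
    (ψ : ρ.ker →* S) : X →* Wr G S where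
  toFun x := ⟨fun g => if hg : g ∈ ρ.range then ψ ⟨_, mem_ker_aux ρ hg x⟩ else 1, ρ x⟩
  map_one' := by
    refine SemidirectProduct.ext ?_ (map_one ρ)
    funext g
    by_cases hg : g ∈ ρ.range
    · simp only [dif_pos hg]
      have : (⟨sec ρ g * 1 * (sec ρ (g * ρ 1))⁻¹, mem_ker_aux ρ hg 1⟩ : ρ.ker) = 1 := by
        ext
        simp
      rw [this, map_one]
      rfl
    · simp only [dif_neg hg]; rfl
  map_mul' x y := by
    refine SemidirectProduct.ext ?_ (map_mul ρ x y)
    funext g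
    rw [SemidirectProduct.mul_left]
    show _ = _ * (permAct (C := S) (rt G) (ρ x) _) g
    rw [permAct_apply, rt_inv_apply]
    by_cases hg : g ∈ ρ.range
    · have hg' : g * ρ x ∈ ρ.range := mul_mem hg ⟨x, rfl⟩
      simp only [Pi.mul_apply] at *
      rw [dif_pos hg, dif_pos hg, dif_pos hg', ← map_mul]
      congr 1
      ext
      push_cast
      rw [map_mul ρ x y]
      group
    · have hg' : ¬ (g * ρ x ∈ ρ.range) := by
        intro hgx
        exact hg (by simpa using mul_mem hgx (inv_mem (⟨x, rfl⟩ : ρ x ∈ ρ.range)))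
      simp only [Pi.mul_apply, dif_neg hg, dif_neg hg', mul_one]
  
lemma ind_right {X G S : Type} [Group X] [Group G] [Group S] (ρ : X →* G)
    (ψ : ρ.ker →* S) (x : X) : (ind ρ ψ x).right = ρ x := rfl

lemma ind_left_one {X G S : Type} [Group X] [Group G] [Group S] (ρ : X →* G)
    (ψ : ρ.ker →* S) {k : X} (hk : k ∈ ρ.ker) : (ind ρ ψ k).left 1 = ψ ⟨k, hk⟩ := by
  show (if hg : (1 : G) ∈ ρ.range then ψ ⟨_, mem_ker_aux ρ hg k⟩ else 1) = ψ ⟨k, hk⟩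
  rw [dif_pos (one_mem _)]
  congr 1
  ext
  show sec ρ 1 * k * (sec ρ (1 * ρ k))⁻¹ = k
  rw [MonoidHom.mem_ker] at hk
  simp [sec_one, hk]

end FVAux

open FVAux SemidirectProduct

/-- Density: the image of `φ` hits every element of every finite solvable quotient of `B`. -/
theorem fv_dense {A B : Type} [Group A] [Group B] (φ : A →* B)
    (h : ∀ (S : Type) [Group S] [Finite S] [Group.IsSolvable S],
      Function.Bijective fun ψ : B →* S => ψ.comp φ)
    (T : Type) [Group T] [Finite T] [Group.IsSolvable T] (ρ : B →* T) (b : B) :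
    ∃ a : A, ρ (φ a) = ρ b := by
  classical
  set R : Subgroup T := (ρ.comp φ).range with hR
  let X := T ⧸ R
  let μ : T →* Equiv.Perm X := MulAction.toPermHom T X
  let C := Multiplicative (ZMod 2)
  let E := (X → C) ⋊[permAct μ] T
  haveI : Group.IsSolvable (X → C) := isSolvable_pi
  haveI : Group.IsSolvable E := isSolvable_sdp
  haveI : Finite E := finite_sdp
  let f₀ : X → C := fun x => if x = ((1 : T) : X) then Multiplicative.ofAdd 1 else 1
  -- key: t ∈ R → the action of t fixes f₀
  have key : ∀ t : T, t ∈ R → permAct μ t f₀ = f₀ := by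
    intro t ht
    funext x
    rw [permAct_apply]
    induction x using QuotientGroup.induction_on with
    | H s =>
    have h1 : ((μ t)⁻¹ : Equiv.Perm X) ((s : T) : X) = ((t⁻¹ * s : T) : X) := by
      show (MulAction.toPermHom T X t)⁻¹ _ = _
      rw [← map_inv]
      rfl
    rw [h1]
    show (if _ then _ else _) = (if _ then _ else _)
    congr 1
    simp only [eq_iff_iff]
    rw [QuotientGroup.eq, QuotientGroup.eq]
    constructor
    · intro hmem
      -- (t⁻¹ s)⁻¹ * 1 ∈ R
      have : s⁻¹ * t ∈ R := by simpa [mul_assoc] using hmem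
      simpa using mul_mem (mul_mem this (inv_mem ht)) (one_mem R)
    · intro hmem
      have : s⁻¹ ∈ R := by simpa using hmem
      simpa [mul_inv_rev, mul_assoc] using mul_mem (mul_mem this ht) (one_mem R)
  -- two homomorphisms into E
  let ρ₁ : B →* E := (inr : T →* E).comp ρ
  let ρ₂ : B →* E := ((MulAut.conj (inl f₀ : E)).toMonoidHom.comp (inr : T →* E)).comp ρ
  have hcomm : ∀ t : T, permAct μ t f₀ = f₀ → (inl f₀ : E) * inr t = inr t * inl f₀ := by
    intro t hf
    refine SemidirectProduct.ext ?_ (by simp)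
    simp only [mul_left, left_inl, left_inr, right_inl, right_inr, map_one]
    simp [hf]
  have heq : ρ₁ = ρ₂ := by
    apply (h E).1
    refine MonoidHom.ext fun a => ?_
    show inr (ρ (φ a)) = MulAut.conj (inl f₀) (inr (ρ (φ a)))
    have ht : ρ (φ a) ∈ R := ⟨a, rfl⟩
    rw [MulAut.conj_apply, hcomm _ (key _ ht)]
    group
  -- evaluate at b
  have hb := congrArg (fun ψ : B →* E => ψ b) heq
  have hb2 : (inl f₀ : E) * inr (ρ b) = inr (ρ b) * inl f₀ := by
    have : inr (ρ b) = MulAut.conj (inl f₀) (inr (ρ b)) := hb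
    rw [MulAut.conj_apply] at this
    calc (inl f₀ : E) * inr (ρ b) = (inl f₀ * inr (ρ b) * (inl f₀)⁻¹) * inl f₀ := by group
    _ = inr (ρ b) * inl f₀ := by rw [← this]
  have hfix : permAct μ (ρ b) f₀ = f₀ := by
    have h1 := congrArg SemidirectProduct.left hb2
    simp only [mul_left, left_inl, left_inr, right_inl, right_inr, map_one] at h1
    simpa using h1.symm
  -- evaluate the fixed-point equation at the coset of ρ b
  have h2 := congrFun hfix ((ρ b : T) : X)
  rw [permAct_apply] at h2
  have h3 : ((μ (ρ b))⁻¹ : Equiv.Perm X) ((ρ b : T) : X) = (((ρ b)⁻¹ * ρ b : T) : X) := by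
    rw [← map_inv]
    rfl
  rw [inv_mul_cancel] at h3
  rw [h3] at h2
  have hne : f₀ ((ρ b : T) : X) = Multiplicative.ofAdd 1 := by
    rw [← h2]
    simp [f₀]
  have hcond : ((ρ b : T) : X) = ((1 : T) : X) := by
    by_contra hc
    rw [show f₀ ((ρ b : T) : X) = 1 from if_neg hc] at hne
    exact (by decide : (1 : Multiplicative (ZMod 2)) ≠ Multiplicative.ofAdd 1) hne
  have hmem : ρ b ∈ R := by
    have h4 := QuotientGroup.eq.mp hcond
    simpa using inv_mem h4
  obtain ⟨a, ha⟩ := hmem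
  exact ⟨a, ha⟩

/-- If `φ : A → B` induces an isomorphism of prosolvable completions of
finitely generated groups and `β : B → G` is a homomorphism to a finite solvable group, then
the restriction `φ' : ker (β ∘ φ) → ker β` of `φ` also induces an isomorphism of prosolvable
completions. -/
theorem stmt9 (A B : Type) [Group A] [Group.FG A] [Group B] [Group.FG B] (φ : A →* B)
    (h : ∀ (S : Type) [Group S] [Finite S] [Group.IsSolvable S],
      Function.Bijective fun ψ : B →* S => ψ.comp φ)
    (G : Type) [Group G] [Finite G] [Group.IsSolvable G] (β : B →* G) :
    ∀ (S : Type) [Group S] [Finite S] [Group.IsSolvable S],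
      Function.Bijective fun ψ : β.ker →* S => ψ.comp (kerRestrict φ β) := by
  intro S _ _ _
  haveI : Group.IsSolvable (G → S) := isSolvable_pi
  haveI : Group.IsSolvable (Wr G S) := isSolvable_sdp
  haveI : Finite (Wr G S) := finite_sdp
  constructor
  · -- injectivity
    intro ψ₁ ψ₂ hψ
    simp only at hψ
    set Θ₁ := ind β ψ₁ with hΘ₁
    set Θ₂ := ind β ψ₂ with hΘ₂
    refine MonoidHom.ext fun k => ?_
    obtain ⟨a, ha⟩ := fv_dense φ h (Wr G S × Wr G S) (Θ₁.prod Θ₂) (k : B)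
    have ha1 : Θ₁ (φ a) = Θ₁ (k : B) := congrArg Prod.fst ha
    have ha2 : Θ₂ (φ a) = Θ₂ (k : B) := congrArg Prod.snd ha
    have haker : a ∈ (β.comp φ).ker := by
      rw [MonoidHom.mem_ker]
      show β (φ a) = 1
      have hra := congrArg SemidirectProduct.right ha1
      rw [show (Θ₁ (φ a)).right = β (φ a) from rfl,
        show (Θ₁ (k : B)).right = β (k : B) from rfl] at hra
      rw [hra]
      exact k.2
    have hφa : φ a ∈ β.ker := haker
    have e1 : ψ₁ ⟨φ a, hφa⟩ = ψ₁ k := by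
      have t1 := ind_left_one β ψ₁ (k := (k : B)) k.2
      have t2 := ind_left_one β ψ₁ hφa
      rw [← t1, ← t2, hΘ₁] at *
      rw [ha1]
    have e2 : ψ₂ ⟨φ a, hφa⟩ = ψ₂ k := by
      have t1 := ind_left_one β ψ₂ (k := (k : B)) k.2
      have t2 := ind_left_one β ψ₂ hφa
      rw [← t1, ← t2, hΘ₂] at *
      rw [ha2]
    have hmid : ψ₁ ⟨φ a, hφa⟩ = ψ₂ ⟨φ a, hφa⟩ := DFunLike.congr_fun hψ ⟨a, haker⟩
    rw [← e1, hmid, e2]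
  · -- surjectivity
    intro ψ₀
    set ΘA := ind (β.comp φ) ψ₀ with hΘA
    obtain ⟨ΘB, hΘB⟩ := (h (Wr G S)).2 ΘA
    simp only at hΘB
    have hr : (SemidirectProduct.rightHom : Wr G S →* G).comp ΘB = β := by
      apply (h G).1
      show (SemidirectProduct.rightHom.comp ΘB).comp φ = β.comp φ
      rw [MonoidHom.comp_assoc, hΘB]
      exact MonoidHom.ext fun a => ind_right (β.comp φ) ψ₀ a
    have hright : ∀ k : β.ker, (ΘB (k : B)).right = 1 := by
      intro k
      have h1 : SemidirectProduct.rightHom (ΘB (k : B)) = β (k : B) :=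
        DFunLike.congr_fun hr (k : B)
      have h2 : β (k : B) = 1 := k.2
      exact h1.trans h2
    refine ⟨{ toFun := fun k => (ΘB (k : B)).left 1, map_one' := ?_, map_mul' := ?_ }, ?_⟩
    · show (ΘB ((1 : β.ker) : B)).left 1 = 1
      rw [show ((1 : β.ker) : B) = 1 from rfl, map_one ΘB]
      simp
    · intro k k'
      show (ΘB ((k * k' : β.ker) : B)).left 1 = _
      rw [show ((k * k' : β.ker) : B) = (k : B) * (k' : B) from rfl, map_mul ΘB,
        SemidirectProduct.mul_left]
      rw [Pi.mul_apply, permAct_apply, rt_inv_apply, hright k, mul_one]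
    · refine MonoidHom.ext fun x => ?_
      show (ΘB (φ (x : A))).left 1 = ψ₀ x
      have h1 : ΘB (φ (x : A)) = ΘA (x : A) := DFunLike.congr_fun hΘB (x : A)
      rw [h1, hΘA, ind_left_one (β.comp φ) ψ₀ x.2]
end

section
/- Let A and B be finitely generated groups, let i: A → B be a homomorphism, let n ∈ ℕ, and suppose that for every finite solvable group T of derived length ≤ n the precomposition map i*: Hom(B,T) → Hom(A,T) is a bijection. Let S be a finite solvable group of derived length ≤ n, and let A(S) ⊆ A and B(S) ⊆ B denote the intersections of the kernels of all homomorphisms to S. Then the kernel of the composite A → B → B/B(S) equals A(S), and i induces an isomorphism A/A(S) → B/B(S). In particular, if i_-, i_+: A → B are two homomorphisms both satisfying the above bijectivity hypothesis, there exists an automorphism γ of B/B(S) such that the composite of the projection with i_+ equals γ composed with the composite of the projection with i_-. -/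
namespace FV

/-- `C(H)`: the intersection of the kernels of all homomorphisms `C → H`. -/
def kerInt (C : Type) [Group C] (H : Type) [Group H] : Subgroup C :=
  ⨅ f : C →* H, f.ker

instance kerInt_normal (C : Type) [Group C] (H : Type) [Group H] : (kerInt C H).Normal := by
  constructor
  intro x hx g
  rw [kerInt, Subgroup.mem_iInf] at hx ⊢
  intro f
  have hf := hx f
  rw [MonoidHom.mem_ker] at hf ⊢
  simp [hf]

lemma kerInt_le_comap {A B : Type} [Group A] [Group B] (i : A →* B) (S : Type) [Group S] :
    kerInt A S ≤ (kerInt B S).comap i := by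
  intro a ha
  rw [kerInt, Subgroup.mem_iInf] at ha
  rw [Subgroup.mem_comap, kerInt, Subgroup.mem_iInf]
  intro f
  exact ha (f.comp i)

end FV

open FV

namespace FV
section
variable (B S : Type) [Group B] [Group S]

def evalHom : B →* ((B →* S) → S) where
  toFun b := fun f => f b
  map_one' := by funext f; simp
  map_mul' x y := by funext f; simp

lemma mem_kerInt_iff {B S : Type} [Group B] [Group S] (b : B) :
    b ∈ kerInt B S ↔ ∀ f : B →* S, f b = 1 := by
  rw [kerInt, Subgroup.mem_iInf]; simp [MonoidHom.mem_ker]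

def quotEval : (B ⧸ kerInt B S) →* ((B →* S) → S) :=
  QuotientGroup.lift _ (evalHom B S)
    (fun b hb => by funext f; exact (mem_kerInt_iff b).mp hb f)

lemma quotEval_injective : Function.Injective (quotEval B S) := by
  rw [injective_iff_map_eq_one]
  intro x hx
  obtain ⟨b, rfl⟩ := QuotientGroup.mk_surjective x
  rw [QuotientGroup.eq_one_iff, mem_kerInt_iff]
  intro f
  exact congrFun hx f

lemma finite_hom [Group.FG B] [Finite S] : Finite (B →* S) := by
  obtain ⟨s, hs, hfin⟩ := Group.fg_iff.mp (inferInstance : Group.FG B)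
  haveI : Finite s := hfin
  apply Finite.of_injective (fun f : B →* S => fun x : s => f x.1)
  intro f g h
  exact MonoidHom.eq_of_eqOn_dense hs (fun x hx => congrFun h ⟨x, hx⟩)

lemma finite_quot [Group.FG B] [Finite S] : Finite (B ⧸ kerInt B S) := by
  haveI := finite_hom B S
  exact Finite.of_injective _ (quotEval_injective B S)

lemma derived_bot_of_injective {G G' : Type} [Group G] [Group G'] (f : G →* G')
    (hf : Function.Injective f) {n : ℕ} (h : derivedSeries G' n = ⊥) :
    derivedSeries G n = ⊥ := by
  rw [eq_bot_iff]
  intro x hx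
  have : f x ∈ (derivedSeries G n).map f := Subgroup.mem_map_of_mem f hx
  have := map_derivedSeries_le_derivedSeries f n this
  rw [h, Subgroup.mem_bot] at this
  have : f x = f 1 := by simpa using this
  simpa using hf this

lemma derived_pi {ι S : Type} [Group S] {n : ℕ} (h : derivedSeries S n = ⊥) :
    derivedSeries (ι → S) n = ⊥ := by
  rw [eq_bot_iff]
  intro x hx
  have hc : ∀ f : ι, x f = 1 := by
    intro f
    have : (Pi.evalMonoidHom (fun _ : ι => S) f) x ∈
        (derivedSeries (ι → S) n).map (Pi.evalMonoidHom (fun _ : ι => S) f) :=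
      Subgroup.mem_map_of_mem _ hx
    have := map_derivedSeries_le_derivedSeries (Pi.evalMonoidHom (fun _ : ι => S) f) n this
    rw [h, Subgroup.mem_bot] at this
    exact this
  rw [Subgroup.mem_bot]
  funext f
  exact hc f

lemma derived_quot {n : ℕ} (h : derivedSeries S n = ⊥) :
    derivedSeries (B ⧸ kerInt B S) n = ⊥ :=
  derived_bot_of_injective _ (quotEval_injective B S) (derived_pi h)

end
end FV
lemma aux_main (A B : Type) [Group A] [Group.FG A] [Group B] [Group.FG B]
    (n : ℕ) (S : Type) [Group S] [Finite S] [Group.IsSolvable S] (hS : derivedSeries S n = ⊥)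
    (i : A →* B)
    (hi : ∀ (T : Type) [Group T] [Finite T] [Group.IsSolvable T], derivedSeries T n = ⊥ →
      Function.Bijective fun ψ : B →* T => ψ.comp i) :
    ((QuotientGroup.mk' (kerInt B S)).comp i).ker = kerInt A S ∧
    Function.Bijective
      (QuotientGroup.map (kerInt A S) (kerInt B S) i (kerInt_le_comap i S)) := by
  haveI hTfin : Finite (B ⧸ kerInt B S) := finite_quot B S
  have hT : derivedSeries (B ⧸ kerInt B S) n = ⊥ := derived_quot B S hS
  haveI : Group.IsSolvable (B ⧸ kerInt B S) := ⟨⟨n, hT⟩⟩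
  have hker : ((QuotientGroup.mk' (kerInt B S)).comp i).ker = kerInt A S := by
    ext a
    rw [MonoidHom.mem_ker, MonoidHom.comp_apply, QuotientGroup.mk'_apply,
      QuotientGroup.eq_one_iff]
    constructor
    · intro h
      rw [mem_kerInt_iff]
      intro g
      obtain ⟨ψ, hψ⟩ := (hi S hS).2 g
      have h1 : ψ (i a) = 1 := (mem_kerInt_iff (i a)).mp h ψ
      have hψ' : ψ.comp i = g := hψ
      rw [← hψ']
      exact h1
    · intro h
      exact kerInt_le_comap i S h
  refine ⟨hker, ?_, ?_⟩
  · rw [injective_iff_map_eq_one]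
    intro x hx
    obtain ⟨a, rfl⟩ := QuotientGroup.mk_surjective x
    rw [QuotientGroup.map_mk] at hx
    rw [QuotientGroup.eq_one_iff] at hx ⊢
    rw [← hker, MonoidHom.mem_ker, MonoidHom.comp_apply, QuotientGroup.mk'_apply,
      QuotientGroup.eq_one_iff]
    exact hx
  · set π := QuotientGroup.mk' (kerInt B S) with hπ
    set j := π.comp i with hj
    have hjs : Function.Surjective j := by
      set ι := QuotientGroup.kerLift j with hι
      have hιinj : Function.Injective ι := QuotientGroup.kerLift_injective j
      haveI : Finite (A ⧸ j.ker) := Finite.of_injective ι hιinj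
      have hQ : derivedSeries (A ⧸ j.ker) n = ⊥ := derived_bot_of_injective ι hιinj hT
      haveI : Group.IsSolvable (A ⧸ j.ker) := ⟨⟨n, hQ⟩⟩
      obtain ⟨ψ, hψ⟩ := (hi (A ⧸ j.ker) hQ).2 (QuotientGroup.mk' j.ker)
      have h2 : (ι.comp ψ).comp i = π.comp i := by
        rw [MonoidHom.comp_assoc]
        have hψ' : ψ.comp i = QuotientGroup.mk' j.ker := hψ
        rw [hψ']
        ext a
        simp only [MonoidHom.comp_apply, QuotientGroup.mk'_apply, hι,
          QuotientGroup.kerLift_mk]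
        rfl
      have h3 : ι.comp ψ = π := (hi _ hT).1 h2
      intro t
      obtain ⟨b, hb⟩ := QuotientGroup.mk'_surjective (kerInt B S) t
      obtain ⟨x, hx⟩ := QuotientGroup.mk'_surjective j.ker (ψ b)
      refine ⟨x, ?_⟩
      have e1 : j x = ι ((QuotientGroup.mk' j.ker) x) := by
        simp [hι, QuotientGroup.kerLift_mk]
      rw [e1, hx]
      have e2 : ι (ψ b) = π b := by
        have := congrArg (fun f : B →* (B ⧸ kerInt B S) => f b) h3
        simpa using this
      rw [e2, hb]
    intro t
    obtain ⟨a, ha⟩ := hjs t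
    exact ⟨QuotientGroup.mk a, by rw [QuotientGroup.map_mk]; exact ha⟩

/-- Let `i : A → B` be a homomorphism of finitely generated groups such that
`Hom(B,T) → Hom(A,T)` is bijective for every finite solvable `T` of derived length `≤ n`, and
let `S` be a finite solvable group of derived length `≤ n`.  Then the kernel of
`A → B → B/B(S)` equals `A(S)` and `i` induces an isomorphism `A/A(S) → B/B(S)`; moreover, if
`i₋, i₊ : A → B` both satisfy the bijectivity hypothesis, there is an automorphism `γ` of
`B/B(S)` with `proj ∘ i₊ = γ ∘ proj ∘ i₋`. -/
theorem stmt13 (A B : Type) [Group A] [Group.FG A] [Group B] [Group.FG B]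
    (n : ℕ) (S : Type) [Group S] [Finite S] [Group.IsSolvable S] (hS : derivedSeries S n = ⊥)
    (i : A →* B)
    (hi : ∀ (T : Type) [Group T] [Finite T] [Group.IsSolvable T], derivedSeries T n = ⊥ →
      Function.Bijective fun ψ : B →* T => ψ.comp i) :
    ((QuotientGroup.mk' (kerInt B S)).comp i).ker = kerInt A S ∧
    Function.Bijective
      (QuotientGroup.map (kerInt A S) (kerInt B S) i (kerInt_le_comap i S)) ∧
    (∀ iminus iplus : A →* B,
      (∀ (T : Type) [Group T] [Finite T] [Group.IsSolvable T], derivedSeries T n = ⊥ →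
        Function.Bijective fun ψ : B →* T => ψ.comp iminus) →
      (∀ (T : Type) [Group T] [Finite T] [Group.IsSolvable T], derivedSeries T n = ⊥ →
        Function.Bijective fun ψ : B →* T => ψ.comp iplus) →
      ∃ γ : (B ⧸ kerInt B S) ≃* (B ⧸ kerInt B S),
        ∀ a : A, (QuotientGroup.mk (iplus a) : B ⧸ kerInt B S)
          = γ (QuotientGroup.mk (iminus a))) := by
  obtain ⟨h1, h2⟩ := aux_main A B n S hS i hi
  refine ⟨h1, h2, ?_⟩
  intro iminus iplus hm hp
  have bm := (aux_main A B n S hS iminus hm).2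
  have bp := (aux_main A B n S hS iplus hp).2
  refine ⟨(MulEquiv.ofBijective _ bm).symm.trans (MulEquiv.ofBijective _ bp), ?_⟩
  intro a
  have em : (MulEquiv.ofBijective _ bm) (QuotientGroup.mk a : A ⧸ kerInt A S)
      = (QuotientGroup.mk (iminus a) : B ⧸ kerInt B S) :=
    QuotientGroup.map_mk (kerInt A S) (kerInt B S) iminus (kerInt_le_comap iminus S) a
  have hsymm : (MulEquiv.ofBijective _ bm).symm
      (QuotientGroup.mk (iminus a) : B ⧸ kerInt B S) = QuotientGroup.mk a := by
    rw [← em, MulEquiv.symm_apply_apply]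
  rw [MulEquiv.trans_apply, hsymm]
  exact (QuotientGroup.map_mk (kerInt A S) (kerInt B S) iplus (kerInt_le_comap iplus S) a).symm
end

section
/- Let A and B be finitely generated groups and let i_-, i_+: A → B be injective homomorphisms. Let n ∈ ℕ and suppose that for each of i_- and i_+ and for every finite solvable group T of derived length ≤ n, the precomposition map Hom(B,T) → Hom(A,T) is a bijection. Let S be a finite solvable group of derived length ≤ n, and let B(S) denote the intersection of the kernels of all homomorphisms B → S. Let π be the HNN extension of B along the isomorphism between the subgroups i_+(A) and i_-(A) of B induced by i_- ∘ i_+⁻¹, i.e. π = ⟨B, t | t i_+(a) t⁻¹ = i_-(a) for all a ∈ A⟩. Then there exist k ≥ 1, an action of ℤ/k on B/B(S) by group automorphisms, and a group homomorphism from π to the semidirect product (ℤ/k) ⋉ (B/B(S)) whose restriction to B is the composition of the quotient map B → B/B(S) with the canonical inclusion of B/B(S) into the semidirect product. -/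
open FV

lemma finite_monoidHom (B S : Type) [Group B] [Group.FG B] [Group S] [Finite S] :
    Finite (B →* S) := by
  obtain ⟨T, hT, hTfin⟩ := Group.fg_iff.mp ‹Group.FG B›
  haveI : Finite T := hTfin
  have hinj : Function.Injective (fun f : B →* S => (fun t : T => f t : T → S)) := by
    intro f g h
    refine MonoidHom.eq_of_eqOn_dense hT ?_
    intro x hx
    exact congrFun h ⟨x, hx⟩
  exact Finite.of_injective _ hinj

/-- Let `i₋, i₊ : A → B` be monomorphisms of finitely generated groups, each
inducing a bijection `Hom(B,T) → Hom(A,T)` for all finite solvable `T` of derived length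
`≤ n`, and let `S` be finite solvable of derived length `≤ n`.  Let `π` be the HNN extension
`⟨B, t | t i₊(a) t⁻¹ = i₋(a)⟩`.  Then there are `k ≥ 1`, an action of `ℤ/k` on `B/B(S)` by
automorphisms, and a homomorphism `π → (ℤ/k) ⋉ (B/B(S))` restricting on `B` to the projection
`B → B/B(S)` followed by the canonical inclusion. -/
theorem stmt14 (A B : Type) [Group A] [Group.FG A] [Group B] [Group.FG B]
    (iminus iplus : A →* B)
    (hminus : Function.Injective iminus) (hplus : Function.Injective iplus)
    (n : ℕ)
    (hm : ∀ (T : Type) [Group T] [Finite T] [Group.IsSolvable T], derivedSeries T n = ⊥ →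
      Function.Bijective fun ψ : B →* T => ψ.comp iminus)
    (hp : ∀ (T : Type) [Group T] [Finite T] [Group.IsSolvable T], derivedSeries T n = ⊥ →
      Function.Bijective fun ψ : B →* T => ψ.comp iplus)
    (S : Type) [Group S] [Finite S] [Group.IsSolvable S] (hS : derivedSeries S n = ⊥) :
    ∃ k : ℕ, 0 < k ∧
      ∃ (act : Multiplicative (ZMod k) →* MulAut (B ⧸ kerInt B S))
        (Φ : HNNExtension B iplus.range iminus.range
            ((MonoidHom.ofInjective hplus).symm.trans (MonoidHom.ofInjective hminus)) →*
          (B ⧸ kerInt B S) ⋊[act] Multiplicative (ZMod k)),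
        Φ.comp HNNExtension.of
          = SemidirectProduct.inl.comp (QuotientGroup.mk' (kerInt B S)) := by
  classical
  haveI : Finite (B →* S) := finite_monoidHom B S
  set N : Subgroup B := kerInt B S with hNdef
  have hmemN : ∀ b : B, b ∈ N ↔ ∀ f : B →* S, f b = 1 := by
    intro b
    simp [hNdef, kerInt, Subgroup.mem_iInf, MonoidHom.mem_ker]
  let p : B →* B ⧸ N := QuotientGroup.mk' N
  -- the embedding of B/N into a product of copies of S
  let E : B →* ((B →* S) → S) := Pi.monoidHom (fun f => f)
  have hNE : N ≤ E.ker := by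
    intro b hb
    rw [MonoidHom.mem_ker]
    funext f
    exact (hmemN b).mp hb f
  let e : (B ⧸ N) →* ((B →* S) → S) := QuotientGroup.lift N E hNE
  have heinj : Function.Injective e := by
    rw [injective_iff_map_eq_one]
    intro q
    refine QuotientGroup.induction_on q ?_
    intro b hb
    have : ∀ f : B →* S, f b = 1 := fun f => congrFun hb f
    exact (QuotientGroup.eq_one_iff b).mpr ((hmemN b).mpr this)
  haveI : Finite (B ⧸ N) := Finite.of_injective _ heinj
  -- derived series of the product vanishes at n
  have hPi : derivedSeries ((B →* S) → S) n = ⊥ := by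
    rw [eq_bot_iff]
    intro x hx
    rw [Subgroup.mem_bot]
    funext f
    have h1 : x f ∈ derivedSeries S n :=
      map_derivedSeries_le_derivedSeries (Pi.evalMonoidHom (fun _ : (B →* S) => S) f) n
        (Subgroup.mem_map_of_mem _ hx)
    rw [hS, Subgroup.mem_bot] at h1
    exact h1
  have hQder : derivedSeries (B ⧸ N) n = ⊥ := by
    rw [eq_bot_iff]
    intro q hq
    have h1 : e q ∈ derivedSeries ((B →* S) → S) n :=
      map_derivedSeries_le_derivedSeries e n (Subgroup.mem_map_of_mem _ hq)
    rw [hPi, Subgroup.mem_bot] at h1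
    rw [Subgroup.mem_bot]
    exact heinj (by rw [h1, map_one])
  haveI : Group.IsSolvable (B ⧸ N) := ⟨⟨n, hQder⟩⟩
  -- every hom B → B/N kills N
  have hfac : ∀ f : B →* B ⧸ N, N ≤ f.ker := by
    intro f b hb
    rw [MonoidHom.mem_ker]
    obtain ⟨x, hx⟩ := QuotientGroup.mk_surjective (f b)
    have hxN : x ∈ N := by
      rw [hmemN]
      intro g
      have hgle : N ≤ g.ker := fun c hc => (hmemN c).mp hc g
      have h2 : (QuotientGroup.lift N g hgle).comp f b = 1 :=
        (hmemN b).mp hb ((QuotientGroup.lift N g hgle).comp f)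
      rw [MonoidHom.comp_apply, ← hx, QuotientGroup.lift_mk'] at h2
      exact h2
    rw [← hx]
    exact (QuotientGroup.eq_one_iff x).mpr hxN
  -- construct the automorphism σ of B/N
  obtain ⟨ψ, hψ⟩ := (hp (B ⧸ N) hQder).surjective (p.comp iminus)
  obtain ⟨τ, hτ⟩ := (hm (B ⧸ N) hQder).surjective (p.comp iplus)
  have hψ' : ∀ a : A, ψ (iplus a) = p (iminus a) := fun a => DFunLike.congr_fun hψ a
  have hτ' : ∀ a : A, τ (iminus a) = p (iplus a) := fun a => DFunLike.congr_fun hτ a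
  let σbar : (B ⧸ N) →* (B ⧸ N) := QuotientGroup.lift N ψ (hfac ψ)
  let τbar : (B ⧸ N) →* (B ⧸ N) := QuotientGroup.lift N τ (hfac τ)
  have hσp : ∀ b : B, σbar (p b) = ψ b := fun b => QuotientGroup.lift_mk' N (hfac ψ) b
  have hτp : ∀ b : B, τbar (p b) = τ b := fun b => QuotientGroup.lift_mk' N (hfac τ) b
  have hcomp1 : σbar.comp τ = p := by
    have := (hm (B ⧸ N) hQder).injective (a₁ := σbar.comp τ) (a₂ := p) ?_
    · exact this
    · show (σbar.comp τ).comp iminus = p.comp iminus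
      ext a
      simp only [MonoidHom.comp_apply]
      rw [hτ' a, hσp, hψ' a]
  have hcomp2 : τbar.comp ψ = p := by
    have := (hp (B ⧸ N) hQder).injective (a₁ := τbar.comp ψ) (a₂ := p) ?_
    · exact this
    · show (τbar.comp ψ).comp iplus = p.comp iplus
      ext a
      simp only [MonoidHom.comp_apply]
      rw [hψ' a, hτp, hτ' a]
  have h1 : τbar.comp σbar = MonoidHom.id _ := by
    ext b
    have : τbar (σbar (p b)) = p b := by
      rw [hσp, ← MonoidHom.comp_apply, hcomp2]
    simp
    exact this
  have h2 : σbar.comp τbar = MonoidHom.id _ := by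
    ext b
    have : σbar (τbar (p b)) = p b := by
      rw [hτp, ← MonoidHom.comp_apply, hcomp1]
    simp
    exact this
  let σ : MulAut (B ⧸ N) := MonoidHom.toMulEquiv σbar τbar h1 h2
  have hσ : ∀ q, σ q = σbar q := fun _ => rfl
  haveI : Finite (MulAut (B ⧸ N)) :=
    Finite.of_injective (fun (φ : MulAut (B ⧸ N)) => (φ : (B ⧸ N) → (B ⧸ N)))
      (fun φ₁ φ₂ h => by ext x; exact congrFun h x)
  refine ⟨orderOf σ, orderOf_pos σ, ?_⟩
  -- the action of ZMod (orderOf σ)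
  let gZ : ℤ →+ Additive (MulAut (B ⧸ N)) := zmultiplesHom _ (Additive.ofMul σ)
  have hgk : gZ (orderOf σ) = 0 := by
    show ((orderOf σ : ℤ) • Additive.ofMul σ) = 0
    rw [← ofMul_zpow, zpow_natCast, pow_orderOf_eq_one]
    rfl
  let glift : ZMod (orderOf σ) →+ Additive (MulAut (B ⧸ N)) := ZMod.lift _ ⟨gZ, hgk⟩
  let act : Multiplicative (ZMod (orderOf σ)) →* MulAut (B ⧸ N) :=
    (MulEquiv.multiplicativeAdditive (MulAut (B ⧸ N))).toMonoidHom.comp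
      (AddMonoidHom.toMultiplicative glift)
  have hact1 : act (Multiplicative.ofAdd (1 : ZMod (orderOf σ))) = σ := by
    have hc : ((1 : ℤ) : ZMod (orderOf σ)) = 1 := Int.cast_one
    show (MulEquiv.multiplicativeAdditive (MulAut (B ⧸ N)))
        (Multiplicative.ofAdd (glift (1 : ZMod (orderOf σ)))) = σ
    rw [← hc]
    rw [show glift (((1 : ℤ) : ZMod (orderOf σ))) = gZ 1 from ZMod.lift_coe _ _ 1]
    show Additive.toMul ((1 : ℤ) • Additive.ofMul σ) = σ
    rw [one_zsmul]
    rfl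
  refine ⟨act, ?_⟩
  -- the homomorphism out of the HNN extension
  let f : B →* (B ⧸ N) ⋊[act] Multiplicative (ZMod (orderOf σ)) :=
    SemidirectProduct.inl.comp p
  let g1 : Multiplicative (ZMod (orderOf σ)) := Multiplicative.ofAdd 1
  let x : (B ⧸ N) ⋊[act] Multiplicative (ZMod (orderOf σ)) := SemidirectProduct.inr g1
  have hsd : ∀ q : B ⧸ N, x * SemidirectProduct.inl q = SemidirectProduct.inl (act g1 q) * x := by
    intro q
    rw [SemidirectProduct.inl_aut, mul_assoc, ← map_mul, inv_mul_cancel, map_one, mul_one]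
  have hx : ∀ a : (iplus.range : Subgroup B),
      x * f ↑a = f ↑(((MonoidHom.ofInjective hplus).symm.trans (MonoidHom.ofInjective hminus)) a) * x := by
    rintro ⟨-, a, rfl⟩
    have hsymm : (MonoidHom.ofInjective hplus).symm ⟨iplus a, ⟨a, rfl⟩⟩ = a :=
      (MulEquiv.symm_apply_eq _).mpr (Subtype.ext (MonoidHom.ofInjective_apply hplus).symm)
    have hcoe : (↑(((MonoidHom.ofInjective hplus).symm.trans (MonoidHom.ofInjective hminus))
        ⟨iplus a, ⟨a, rfl⟩⟩) : B) = iminus a := by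
      rw [MulEquiv.trans_apply, hsymm]
      exact MonoidHom.ofInjective_apply hminus
    rw [hcoe]
    show x * SemidirectProduct.inl (p (iplus a)) = SemidirectProduct.inl (p (iminus a)) * x
    rw [hsd, hact1, hσ, hσp, hψ' a]
  refine ⟨HNNExtension.lift f x hx, ?_⟩
  refine MonoidHom.ext fun b => ?_
  simp only [MonoidHom.comp_apply, HNNExtension.lift_of]
  rfl
end
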